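/- arXiv:2604.15154 — 3 statements merged into one kernel-verified Lean document; each statement's English description precedes it below -/
import Mathlib

section
/- Let G, H be finitely generated groups with free product G * H, and let T be the Bass–Serre tree of G * H: vertices are the empty word φ together with cosets wG and wH (w reduced and ending in the other factor or trivial), with edges φ—φG, φ—φH, wG—wgH for g ∈ G \ {e_G} (w ending in H), and wH—whG for h ∈ H \ {e_H} (w ending in G). Then T is a tree, i.e., a connected graph with no cycles. -/
open Monoid

variable (G H : Type*) [Group G] [Group H]

/-- Vertices of the Bass–Serre tree of `G * H`: the extra base vertex `φ` (`none`),
together with the left cosets `wG` and the left cosets `wH`. -/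
abbrev BSVertex :=
  Option ((Coprod G H ⧸ (Coprod.inl : G →* Coprod G H).range) ⊕
          (Coprod G H ⧸ (Coprod.inr : H →* Coprod G H).range))

/-- The basic (oriented) edge relation: `φ` is joined to the cosets `G` and `H`, and a
coset `aG` is joined to a coset `bH` exactly when they share a nontrivial element
(equivalently, `aG = zG` and `bH = zH` for some `z ≠ 1`; this encodes the edges
`wG — wgH` for `g ≠ e_G` and `wH — whG` for `h ≠ e_H`). -/
def bsRel (v w : BSVertex G H) : Prop :=
  (v = none ∧
    (w = some (Sum.inl ((1 : Coprod G H) : Coprod G H ⧸ (Coprod.inl : G →* Coprod G H).range)) ∨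
     w = some (Sum.inr ((1 : Coprod G H) : Coprod G H ⧸ (Coprod.inr : H →* Coprod G H).range)))) ∨
  (∃ (x : Coprod G H ⧸ (Coprod.inl : G →* Coprod G H).range)
     (y : Coprod G H ⧸ (Coprod.inr : H →* Coprod G H).range) (z : Coprod G H),
      z ≠ 1 ∧ v = some (Sum.inl x) ∧ w = some (Sum.inr y) ∧
      (z : Coprod G H ⧸ (Coprod.inl : G →* Coprod G H).range) = x ∧
      (z : Coprod G H ⧸ (Coprod.inr : H →* Coprod G H).range) = y)

/-- The Bass–Serre tree of the free product `G * H`, as a simple graph. -/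
def bsGraph : SimpleGraph (BSVertex G H) where
  Adj v w := bsRel G H v w ∨ bsRel G H w v
  symm := by constructor; intro v w h; exact h.symm
  loopless := by
    constructor
    intro v h
    rcases h with h | h <;>
      rcases h with ⟨h1, h2⟩ | ⟨x, y, z, hz, h1, h2, _, _⟩ <;> simp_all


namespace BSAux

open Monoid.CoprodI

/-! ### An abstract criterion for being a tree -/

theorem isTree_of_parent {V : Type*} (Γ : SimpleGraph V) (root : V) (lv : V → ℕ) (par : V → V)
    (h2 : ∀ v, v ≠ root → Γ.Adj v (par v) ∧ lv (par v) + 1 = lv v)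
    (h3 : ∀ v u, Γ.Adj v u → (v = par u ∧ lv v + 1 = lv u) ∨ (u = par v ∧ lv u + 1 = lv v)) :
    Γ.IsTree := by
  classical
  have hreach : ∀ v, Γ.Reachable root v := by
    have : ∀ (n : ℕ) (v : V), lv v = n → Γ.Reachable root v := by
      intro n
      induction n using Nat.strong_induction_on with
      | _ n ih =>
        intro v hn
        rcases eq_or_ne v root with rfl | hv
        · exact SimpleGraph.Reachable.refl _
        · obtain ⟨hadj, hlv⟩ := h2 v hv
          exact (ih (lv (par v)) (by omega) (par v) rfl).trans hadj.symm.reachable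
    exact fun v => this (lv v) v rfl
  constructor
  · haveI : Nonempty V := ⟨root⟩
    exact ⟨fun u v => (hreach u).symm.trans (hreach v)⟩
  · have key : ∀ (u : V) (c : Γ.Walk u u), c.IsCycle →
        (∀ w ∈ c.support, lv w ≤ lv u) → False := by
      intro u c hc hmax
      cases c with
      | nil => exact hc.ne_nil rfl
      | cons h q =>
        rename_i a
        rw [SimpleGraph.Walk.cons_isCycle_iff] at hc
        obtain ⟨hq, he⟩ := hc
        obtain ⟨b, q', hb, hqc⟩ : ∃ (b : V) (q' : Γ.Walk a b) (hb : Γ.Adj b u),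
            q = q'.concat hb := by
          cases q with
          | nil => exact (h.ne rfl).elim
          | cons h₂ r =>
            obtain ⟨x, q₂, h', hcq⟩ := SimpleGraph.Walk.exists_cons_eq_concat h₂ r
            exact ⟨x, q₂, h', hcq⟩
        have hbmem : s(b, u) ∈ q.edges := by
          rw [hqc]; simp [SimpleGraph.Walk.edges_concat]
        have hamem : a ∈ (SimpleGraph.Walk.cons h q).support := by
          simp [SimpleGraph.Walk.support_cons]
        have hbmem' : b ∈ (SimpleGraph.Walk.cons h q).support := by
          have : b ∈ q.support := by
            rw [hqc, SimpleGraph.Walk.support_concat]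
            simp [List.concat_eq_append, SimpleGraph.Walk.end_mem_support]
          simp [SimpleGraph.Walk.support_cons, this]
        have ha : a = par u := by
          rcases h3 u a h with ⟨h1, h2'⟩ | ⟨h1, _⟩
          · have := hmax a hamem; omega
          · exact h1
        have hbpar : b = par u := by
          rcases h3 u b hb.symm with ⟨h1, h2'⟩ | ⟨h1, _⟩
          · have := hmax b hbmem'; omega
          · exact h1
        have hab : b = a := hbpar.trans ha.symm
        subst hab
        exact he (Sym2.eq_swap ▸ hbmem)
    intro v c hc
    have hsupnonempty : c.support.toFinset.Nonempty :=
      ⟨v, List.mem_toFinset.mpr (SimpleGraph.Walk.start_mem_support c)⟩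
    obtain ⟨u, hu, humax⟩ := Finset.exists_max_image c.support.toFinset lv hsupnonempty
    rw [List.mem_toFinset] at hu
    refine key u (c.rotate u hu) (hc.rotate hu) ?_
    intro w hw
    have hw' : w ∈ c.support := by
      rw [SimpleGraph.Walk.support_eq_cons] at hw
      rcases List.mem_cons.mp hw with rfl | hw
      · exact hu
      · exact List.mem_of_mem_tail
          (((SimpleGraph.Walk.support_rotate c u hu).perm.mem_iff).mp hw)
    exact humax w (List.mem_toFinset.mpr hw')

/-! ### The free product as an indexed coproduct over `Bool`, and normal forms -/

universe u v

variable (G : Type u) (H : Type v) [Group G] [Group H]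

abbrev fam : Bool → Type (max u v) := fun b => cond b (ULift.{v} G) (ULift.{u} H)

instance : ∀ b, Group (fam G H b) := by
  intro b; cases b
  · exact inferInstanceAs (Group (ULift H))
  · exact inferInstanceAs (Group (ULift G))

noncomputable instance : ∀ b, DecidableEq (fam G H b) := fun _ => Classical.decEq _

abbrev K := CoprodI (fam G H)

abbrev QG := Coprod G H ⧸ (Coprod.inl : G →* Coprod G H).range

abbrev QH := Coprod G H ⧸ (Coprod.inr : H →* Coprod G H).range

/-- The isomorphism between the binary coproduct and the indexed coproduct over `Bool`. -/
noncomputable def ee : Coprod G H ≃* K G H :=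
  MonoidHom.toMulEquiv
    (Coprod.lift
      ((CoprodI.of (i := true)).comp (MulEquiv.ulift.symm : G ≃* ULift.{v} G).toMonoidHom)
      ((CoprodI.of (i := false)).comp (MulEquiv.ulift.symm : H ≃* ULift.{u} H).toMonoidHom))
    (CoprodI.lift (fun b => Bool.rec
      ((Coprod.inr : H →* Coprod G H).comp (MulEquiv.ulift : ULift.{u} H ≃* H).toMonoidHom)
      ((Coprod.inl : G →* Coprod G H).comp (MulEquiv.ulift : ULift.{v} G ≃* G).toMonoidHom) b))
    (by
      apply Coprod.hom_ext <;> ext x <;>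
        simp only [MonoidHom.comp_apply, MonoidHom.id_apply, Coprod.lift_apply_inl,
          Coprod.lift_apply_inr, MulEquiv.coe_toMonoidHom, CoprodI.lift_of] <;> rfl)
    (by
      apply CoprodI.ext_hom
      intro i
      cases i <;> ext x <;>
        simp only [MonoidHom.comp_apply, MonoidHom.id_apply, Coprod.lift_apply_inl,
          Coprod.lift_apply_inr, MulEquiv.coe_toMonoidHom, CoprodI.lift_of] <;> rfl)

lemma ee_inl (g : G) :
    ee G H (Coprod.inl g) = CoprodI.of (M := fam G H) (i := true) (ULift.up g) := by
  simp [ee, MonoidHom.toMulEquiv, Coprod.lift_apply_inl]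
  rfl

lemma ee_inr (h : H) :
    ee G H (Coprod.inr h) = CoprodI.of (M := fam G H) (i := false) (ULift.up h) := by
  simp [ee, MonoidHom.toMulEquiv, Coprod.lift_apply_inr]
  rfl

variable {G H}

/-- The normal-form word of an element of the free product. -/
noncomputable def wd (z : Coprod G H) : Word (fam G H) := Word.equiv (ee G H z)

lemma wd_def (z : Coprod G H) : wd z = ee G H z • Word.empty := rfl

lemma prod_wd (z : Coprod G H) : Word.prod (wd z) = ee G H z :=
  Word.equiv.symm_apply_apply _

lemma wd_prod (w : Word (fam G H)) : wd ((ee G H).symm (Word.prod w)) = w := by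
  rw [wd, MulEquiv.apply_symm_apply]
  exact Word.equiv.apply_symm_apply w

lemma wd_one : wd (1 : Coprod G H) = Word.empty := by
  rw [wd_def, map_one, one_smul]

lemma wd_eq_empty_iff {z : Coprod G H} : wd z = Word.empty ↔ z = 1 := by
  constructor
  · intro h
    have h2 := congrArg Word.prod h
    rw [prod_wd, Word.prod_empty] at h2
    exact (MulEquiv.map_eq_one_iff (ee G H)).mp h2
  · rintro rfl; exact wd_one

/-- The tail of the normal form of `z⁻¹` after deleting its leading letter of type `b`
(if any); this is an invariant of the coset `z·G` (for `b = true`), resp. `z·H`. -/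
noncomputable def tl (b : Bool) (z : Coprod G H) : Word (fam G H) :=
  (Word.equivPair b (wd z⁻¹)).tail

lemma fstIdx_tl (b : Bool) (z : Coprod G H) : Word.fstIdx (tl b z) ≠ some b :=
  (Word.equivPair b (wd z⁻¹)).fstIdx_ne

lemma head_mul_prod_tl (b : Bool) (z : Coprod G H) :
    CoprodI.of (Word.equivPair b (wd z⁻¹)).head * Word.prod (tl b z) = ee G H z⁻¹ := by
  rw [tl, ← Word.prod_rcons, ← Word.equivPair_symm, Equiv.symm_apply_apply, prod_wd]

lemma tl_true_inl (z : Coprod G H) (g : G) : tl true (z * Coprod.inl g) = tl true z := by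
  have h0 : (z * Coprod.inl g)⁻¹ = Coprod.inl g⁻¹ * z⁻¹ := by
    rw [mul_inv_rev, ← map_inv]
  have h1 : wd (z * Coprod.inl g)⁻¹
      = CoprodI.of (M := fam G H) (i := true) (ULift.up g⁻¹) • wd z⁻¹ := by
    rw [h0, wd_def, map_mul, ee_inl, mul_smul, ← wd_def]
  rw [tl, tl, h1, Word.equivPair_smul_same]

lemma tl_false_inr (z : Coprod G H) (h : H) : tl false (z * Coprod.inr h) = tl false z := by
  have h0 : (z * Coprod.inr h)⁻¹ = Coprod.inr h⁻¹ * z⁻¹ := by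
    rw [mul_inv_rev, ← map_inv]
  have h1 : wd (z * Coprod.inr h)⁻¹
      = CoprodI.of (M := fam G H) (i := false) (ULift.up h⁻¹) • wd z⁻¹ := by
    rw [h0, wd_def, map_mul, ee_inr, mul_smul, ← wd_def]
  rw [tl, tl, h1, Word.equivPair_smul_same]

/-! ### Coset invariants -/

noncomputable def TG (x : QG G H) : Word (fam G H) :=
  Quotient.liftOn' x (tl true) (by
    intro z z' hzz'
    rw [QuotientGroup.leftRel_apply] at hzz'
    obtain ⟨g, hg⟩ := hzz'
    have hz' : z' = z * Coprod.inl g := by rw [hg, mul_inv_cancel_left]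
    rw [hz', tl_true_inl])

noncomputable def TH (y : QH G H) : Word (fam G H) :=
  Quotient.liftOn' y (tl false) (by
    intro z z' hzz'
    rw [QuotientGroup.leftRel_apply] at hzz'
    obtain ⟨h, hg⟩ := hzz'
    have hz' : z' = z * Coprod.inr h := by rw [hg, mul_inv_cancel_left]
    rw [hz', tl_false_inr])

lemma TG_mk (z : Coprod G H) : TG ((z : Coprod G H) : QG G H) = tl true z := rfl

lemma TH_mk (z : Coprod G H) : TH ((z : Coprod G H) : QH G H) = tl false z := rfl

/-- The canonical representative of a coset `zG`. -/
noncomputable def rG (x : QG G H) : Coprod G H := ((ee G H).symm (Word.prod (TG x)))⁻¹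

/-- The canonical representative of a coset `zH`. -/
noncomputable def rH (y : QH G H) : Coprod G H := ((ee G H).symm (Word.prod (TH y)))⁻¹

lemma fstIdx_TG (x : QG G H) : Word.fstIdx (TG x) ≠ some true := by
  refine QuotientGroup.induction_on x fun z => ?_
  rw [TG_mk]; exact fstIdx_tl true z

lemma fstIdx_TH (y : QH G H) : Word.fstIdx (TH y) ≠ some false := by
  refine QuotientGroup.induction_on y fun z => ?_
  rw [TH_mk]; exact fstIdx_tl false z

lemma mk_rG (x : QG G H) : ((rG x : Coprod G H) : QG G H) = x := by
  refine QuotientGroup.induction_on x fun z => ?_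
  rw [QuotientGroup.eq]
  refine ⟨(((Word.equivPair true (wd z⁻¹)).head)⁻¹).down, ?_⟩
  apply (ee G H).injective
  have h2 : ee G H ((rG ((z : Coprod G H) : QG G H))⁻¹) = Word.prod (tl true z) := by
    rw [rG, inv_inv, MulEquiv.apply_symm_apply, TG_mk]
  rw [map_mul, h2, ee_inl]
  have hup : ULift.up (((((Word.equivPair true (wd z⁻¹)).head)⁻¹ : fam G H true)).down)
      = ((Word.equivPair true (wd z⁻¹)).head)⁻¹ := rfl
  rw [hup, map_inv]
  have h3 := head_mul_prod_tl true z
  have h4 : Word.prod (tl true z)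
      = (CoprodI.of (Word.equivPair true (wd z⁻¹)).head)⁻¹ * ee G H z⁻¹ := by
    rw [← h3, inv_mul_cancel_left]
  rw [h4, map_inv, mul_assoc, inv_mul_cancel, mul_one]

lemma mk_rH (y : QH G H) : ((rH y : Coprod G H) : QH G H) = y := by
  refine QuotientGroup.induction_on y fun z => ?_
  rw [QuotientGroup.eq]
  refine ⟨(((Word.equivPair false (wd z⁻¹)).head)⁻¹).down, ?_⟩
  apply (ee G H).injective
  have h2 : ee G H ((rH ((z : Coprod G H) : QH G H))⁻¹) = Word.prod (tl false z) := by
    rw [rH, inv_inv, MulEquiv.apply_symm_apply, TH_mk]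
  rw [map_mul, h2, ee_inr]
  have hup : ULift.up (((((Word.equivPair false (wd z⁻¹)).head)⁻¹ : fam G H false)).down)
      = ((Word.equivPair false (wd z⁻¹)).head)⁻¹ := rfl
  rw [hup, map_inv]
  have h3 := head_mul_prod_tl false z
  have h4 : Word.prod (tl false z)
      = (CoprodI.of (Word.equivPair false (wd z⁻¹)).head)⁻¹ * ee G H z⁻¹ := by
    rw [← h3, inv_mul_cancel_left]
  rw [h4, map_inv, mul_assoc, inv_mul_cancel, mul_one]

lemma wd_rG_inv (x : QG G H) : wd ((rG x)⁻¹) = TG x := by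
  rw [rG, inv_inv, wd_prod]

lemma wd_rH_inv (y : QH G H) : wd ((rH y)⁻¹) = TH y := by
  rw [rH, inv_inv, wd_prod]

lemma fstIdx_empty : Word.fstIdx (Word.empty : Word (fam G H)) ≠ some true ∧
    Word.fstIdx (Word.empty : Word (fam G H)) ≠ some false := by
  constructor <;> simp [Word.fstIdx, Word.empty]

lemma TG_empty_iff (x : QG G H) :
    TG x = Word.empty ↔ x = ((1 : Coprod G H) : QG G H) := by
  constructor
  · intro h
    rw [← mk_rG x, rG, h, Word.prod_empty, map_one, inv_one]
  · rintro rfl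
    rw [TG_mk, tl, inv_one, wd_one, Word.equivPair_eq_of_fstIdx_ne fstIdx_empty.1]

lemma TH_empty_iff (y : QH G H) :
    TH y = Word.empty ↔ y = ((1 : Coprod G H) : QH G H) := by
  constructor
  · intro h
    rw [← mk_rH y, rH, h, Word.prod_empty, map_one, inv_one]
  · rintro rfl
    rw [TH_mk, tl, inv_one, wd_one, Word.equivPair_eq_of_fstIdx_ne fstIdx_empty.2]

lemma rG_ne_one {x : QG G H} (h : TG x ≠ Word.empty) : rG x ≠ 1 := by
  intro h1
  apply h
  rw [← wd_rG_inv x, h1, inv_one, wd_one]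

lemma rH_ne_one {y : QH G H} (h : TH y ≠ Word.empty) : rH y ≠ 1 := by
  intro h1
  apply h
  rw [← wd_rH_inv y, h1, inv_one, wd_one]

/-! ### Some facts about words over `Bool`-indexed families -/

lemma fstIdx_eq_none_iff {w : Word (fam G H)} :
    Word.fstIdx w = none ↔ w = Word.empty := by
  constructor
  · intro h
    have h2 : w.toList = [] := by
      simpa [Word.fstIdx] using h
    exact Word.ext h2
  · rintro rfl
    simp [Word.fstIdx, Word.empty]

lemma length_tail_of_fstIdx {w : Word (fam G H)} {b : Bool} (hw : Word.fstIdx w = some b) :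
    ((Word.equivPair b w).tail).toList.length + 1 = w.toList.length := by
  have hr : Word.rcons (Word.equivPair b w) = w := by
    rw [← Word.equivPair_symm]; exact (Word.equivPair b).symm_apply_apply w
  by_cases hh : (Word.equivPair b w).head = 1
  · exfalso
    rw [Word.rcons, dif_pos hh] at hr
    rw [← hr] at hw
    exact (Word.equivPair b w).fstIdx_ne hw
  · rw [Word.rcons, dif_neg hh] at hr
    have h2 := congrArg Word.toList hr
    simp only [Word.cons] at h2
    rw [← h2]
    simp

lemma fstIdx_some {w : Word (fam G H)} (hne : w ≠ Word.empty) {b : Bool}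
    (hb : Word.fstIdx w ≠ some b) : Word.fstIdx w = some (!b) := by
  rcases hfi : Word.fstIdx w with _ | c
  · exact absurd (fstIdx_eq_none_iff.mp hfi) hne
  · rw [hfi] at hb
    cases b <;> cases c <;> simp_all

/-! ### The level and parent functions on vertices -/

noncomputable def lv : BSVertex G H → ℕ
  | none => 0
  | some (Sum.inl x) => (TG x).toList.length + 1
  | some (Sum.inr y) => (TH y).toList.length + 1

open scoped Classical in
noncomputable def par : BSVertex G H → BSVertex G H
  | none => none
  | some (Sum.inl x) =>
      if TG x = Word.empty then none
      else some (Sum.inr ((rG x : Coprod G H) : QH G H))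
  | some (Sum.inr y) =>
      if TH y = Word.empty then none
      else some (Sum.inl ((rH y : Coprod G H) : QG G H))

lemma parent_spec (v : BSVertex G H) (hv : v ≠ none) :
    (bsGraph G H).Adj v (par v) ∧ lv (par v) + 1 = lv v := by
  match v with
  | none => exact absurd rfl hv
  | some (Sum.inl x) =>
    by_cases hx : TG x = Word.empty
    · have hx1 : x = ((1 : Coprod G H) : QG G H) := (TG_empty_iff x).mp hx
      constructor
      · simp only [par, if_pos hx]
        exact Or.inr (Or.inl ⟨rfl, Or.inl (by rw [hx1])⟩)
      · simp only [par, if_pos hx, lv, hx]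
        simp [Word.empty]
    · constructor
      · simp only [par, if_neg hx]
        exact Or.inl (Or.inr ⟨x, _, rG x, rG_ne_one hx, rfl, rfl, mk_rG x, rfl⟩)
      · simp only [par, if_neg hx, lv, TH_mk]
        have h1 : tl false (rG x) = (Word.equivPair false (TG x)).tail := by
          rw [tl, wd_rG_inv]
        have hfi : Word.fstIdx (TG x) = some false := by
          simpa using fstIdx_some hx (fstIdx_TG x)
        have h2 := length_tail_of_fstIdx hfi
        rw [h1]
        omega
  | some (Sum.inr y) =>
    by_cases hy : TH y = Word.empty
    · have hy1 : y = ((1 : Coprod G H) : QH G H) := (TH_empty_iff y).mp hy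
      constructor
      · simp only [par, if_pos hy]
        exact Or.inr (Or.inl ⟨rfl, Or.inr (by rw [hy1])⟩)
      · simp only [par, if_pos hy, lv, hy]
        simp [Word.empty]
    · constructor
      · simp only [par, if_neg hy]
        exact Or.inr (Or.inr ⟨_, y, rH y, rH_ne_one hy, rfl, rfl, rfl, mk_rH y⟩)
      · simp only [par, if_neg hy, lv, TG_mk]
        have h1 : tl true (rH y) = (Word.equivPair true (TH y)).tail := by
          rw [tl, wd_rH_inv]
        have hfi : Word.fstIdx (TH y) = some true := by
          simpa using fstIdx_some hy (fstIdx_TH y)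
        have h2 := length_tail_of_fstIdx hfi
        rw [h1]
        omega

lemma bsRel_key (v u : BSVertex G H) (h : bsRel G H v u) :
    (v = par u ∧ lv v + 1 = lv u) ∨ (u = par v ∧ lv u + 1 = lv v) := by
  rcases h with ⟨rfl, hu⟩ | ⟨x, y, z, hz, rfl, rfl, hx, hy⟩
  · left
    rcases hu with rfl | rfl
    · have h1 : TG ((1 : Coprod G H) : QG G H) = Word.empty := (TG_empty_iff _).mpr rfl
      constructor
      · simp only [par, if_pos h1]
      · simp only [lv, h1]
        simp [Word.empty]
    · have h1 : TH ((1 : Coprod G H) : QH G H) = Word.empty := (TH_empty_iff _).mpr rfl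
      constructor
      · simp only [par, if_pos h1]
      · simp only [lv, h1]
        simp [Word.empty]
  · subst hx
    subst hy
    have hwne : wd z⁻¹ ≠ Word.empty := fun hcon =>
      hz (by rw [← inv_inv z, wd_eq_empty_iff.mp hcon, inv_one])
    by_cases hf : Word.fstIdx (wd z⁻¹) = some true
    · -- the H-coset vertex is one level further; its parent is the G-coset vertex
      left
      have h1 : tl false z = wd z⁻¹ := by
        rw [tl, Word.equivPair_eq_of_fstIdx_ne (by rw [hf]; simp)]
      have hTH : TH ((z : Coprod G H) : QH G H) ≠ Word.empty := by
        rw [TH_mk, h1]; exact hwne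
      have hrH : rH ((z : Coprod G H) : QH G H) = z := by
        rw [rH, TH_mk, h1, prod_wd, MulEquiv.symm_apply_apply, inv_inv]
      constructor
      · simp only [par, if_neg hTH, hrH]
      · simp only [lv]
        rw [TG_mk, TH_mk, h1]
        have h2 := length_tail_of_fstIdx hf
        have h3 : tl true z = (Word.equivPair true (wd z⁻¹)).tail := rfl
        rw [h3]
        omega
    · right
      have hf' : Word.fstIdx (wd z⁻¹) = some false := by
        simpa using fstIdx_some hwne hf
      have h1 : tl true z = wd z⁻¹ := by
        rw [tl, Word.equivPair_eq_of_fstIdx_ne (by rw [hf']; simp)]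
      have hTG : TG ((z : Coprod G H) : QG G H) ≠ Word.empty := by
        rw [TG_mk, h1]; exact hwne
      have hrG : rG ((z : Coprod G H) : QG G H) = z := by
        rw [rG, TG_mk, h1, prod_wd, MulEquiv.symm_apply_apply, inv_inv]
      constructor
      · simp only [par, if_neg hTG, hrG]
      · simp only [lv]
        rw [TG_mk, TH_mk, h1]
        have h2 := length_tail_of_fstIdx hf'
        have h3 : tl false z = (Word.equivPair false (wd z⁻¹)).tail := rfl
        rw [h3]
        omega

end BSAux

/-- The Bass–Serre graph of a free product `G * H` is a tree: a connected
acyclic graph. -/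
theorem stmt8 : (bsGraph G H).IsTree := by
  refine BSAux.isTree_of_parent (bsGraph G H) none BSAux.lv BSAux.par
    BSAux.parent_spec ?_
  intro v u h
  rcases h with h | h
  · exact BSAux.bsRel_key v u h
  · exact (BSAux.bsRel_key u v h).symm
end

section
/- Let X be a metric space with decomposition X = Y₀ ∪ Y₁, fix r₀ > 0, and let Z₀ := N_{r₀}(Y₀) \ N_{r₀}(Y₁), Z₁ := N_{r₀}(Y₁) \ N_{r₀}(Y₀), Z₀₁ := N_{r₀}(Y₀) ∩ N_{r₀}(Y₁). Let X₀ be a countable dense subset of X, and let a ∈ B(ℓ²(X₀, H)) have propagation less than r₀. Define a₀ := χ_{Z₀} a χ_{Z₀} + χ_{Z₀} a χ_{Z₀₁} + χ_{Z₀₁} a χ_{Z₀} + χ_{Z₀₁} a χ_{Z₀₁} and a₁ := χ_{Z₁} a χ_{Z₁} + χ_{Z₁} a χ_{Z₀₁} + χ_{Z₀₁} a χ_{Z₁}. Then: (i) a = a₀ + a₁; (ii) a₀ and a₁ have propagation less than r₀; (iii) a₀ is supported on N_{r₀}(Y₀) × N_{r₀}(Y₀) and a₁ on N_{r₀}(Y₁)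 × N_{r₀}(Y₁); (iv) ‖a₀‖ ≤ 4‖a‖ and ‖a₁‖ ≤ 3‖a‖. -/
open scoped Classical ENNReal

set_option maxHeartbeats 2000000

/-- Evaluation at a coordinate, as a continuous linear map on `ℓ²(ι, H)`. -/
noncomputable def stmt13EvalCLM {ι : Type*} (H : Type*) [NormedAddCommGroup H]
    [InnerProductSpace ℂ H] (x : ι) : lp (fun _ : ι => H) 2 →L[ℂ] H :=
  LinearMap.mkContinuous
    { toFun := fun f => (f : ∀ _ : ι, H) x
      map_add' := fun f g => rfl
      map_smul' := fun c f => rfl }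
    1 (fun f => by
      rw [one_mul]; exact lp.norm_apply_le_norm (by norm_num : (2:ℝ≥0∞) ≠ 0) f x)

/-- For a decomposition `X = Y₀ ∪ Y₁`, `r₀ > 0`, the pieces
`Z₀ = N_{r₀}(Y₀) \ N_{r₀}(Y₁)`, `Z₁ = N_{r₀}(Y₁) \ N_{r₀}(Y₀)`, `Z₀₁ = N_{r₀}(Y₀) ∩ N_{r₀}(Y₁)`,
and an operator `a` of propagation `< r₀` on `ℓ²(X₀,H)`, the cut-downs
`a₀ = χ_{Z₀}aχ_{Z₀} + χ_{Z₀}aχ_{Z₀₁} + χ_{Z₀₁}aχ_{Z₀} + χ_{Z₀₁}aχ_{Z₀₁}` and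
`a₁ = χ_{Z₁}aχ_{Z₁} + χ_{Z₁}aχ_{Z₀₁} + χ_{Z₀₁}aχ_{Z₁}` satisfy: `a = a₀ + a₁`; both have
propagation `< r₀`; `a₀` is supported on `N_{r₀}(Y₀)²` and `a₁` on `N_{r₀}(Y₁)²`; and
`‖a₀‖ ≤ 4‖a‖`, `‖a₁‖ ≤ 3‖a‖`. -/
theorem stmt13 {X : Type*} [MetricSpace X] (X₀ : Set X) [DecidableEq X₀]
    (hX₀c : X₀.Countable) (hX₀d : Dense X₀)
    {H : Type*} [NormedAddCommGroup H] [InnerProductSpace ℂ H] [CompleteSpace H]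
    (Y₀ Y₁ : Set X) (hcover : Y₀ ∪ Y₁ = Set.univ) (r₀ : ℝ) (hr₀ : 0 < r₀)
    (Z₀ Z₁ Z₀₁ : Set X)
    (hZ₀ : Z₀ = {x | Metric.infDist x Y₀ ≤ r₀} \ {x | Metric.infDist x Y₁ ≤ r₀})
    (hZ₁ : Z₁ = {x | Metric.infDist x Y₁ ≤ r₀} \ {x | Metric.infDist x Y₀ ≤ r₀})
    (hZ₀₁ : Z₀₁ = {x | Metric.infDist x Y₀ ≤ r₀} ∩ {x | Metric.infDist x Y₁ ≤ r₀})
    -- the multiplication operators χ_S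
    (χ : Set X → (lp (fun _ : X₀ => H) 2 →L[ℂ] lp (fun _ : X₀ => H) 2))
    (hχ : ∀ (S : Set X) (f : lp (fun _ : X₀ => H) 2) (x : X₀),
      (χ S f : ∀ _ : X₀, H) x = if (x : X) ∈ S then (f : ∀ _ : X₀, H) x else 0)
    (a : lp (fun _ : X₀ => H) 2 →L[ℂ] lp (fun _ : X₀ => H) 2)
    (hprop : ∀ x y : X₀, (∃ ξ : H, (a (lp.single 2 y ξ) : ∀ _ : X₀, H) x ≠ 0) →
      dist (x : X) (y : X) < r₀)
    (a₀ a₁ : lp (fun _ : X₀ => H) 2 →L[ℂ] lp (fun _ : X₀ => H) 2)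
    (ha₀ : a₀ = χ Z₀ ∘L a ∘L χ Z₀ + χ Z₀ ∘L a ∘L χ Z₀₁ + χ Z₀₁ ∘L a ∘L χ Z₀ +
      χ Z₀₁ ∘L a ∘L χ Z₀₁)
    (ha₁ : a₁ = χ Z₁ ∘L a ∘L χ Z₁ + χ Z₁ ∘L a ∘L χ Z₀₁ + χ Z₀₁ ∘L a ∘L χ Z₁) :
    -- (i) a = a₀ + a₁
    a = a₀ + a₁ ∧
    -- (ii) a₀, a₁ have propagation less than r₀
    (∀ x y : X₀, (∃ ξ : H, (a₀ (lp.single 2 y ξ) : ∀ _ : X₀, H) x ≠ 0) →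
      dist (x : X) (y : X) < r₀) ∧
    (∀ x y : X₀, (∃ ξ : H, (a₁ (lp.single 2 y ξ) : ∀ _ : X₀, H) x ≠ 0) →
      dist (x : X) (y : X) < r₀) ∧
    -- (iii) supports
    (∀ x y : X₀, (∃ ξ : H, (a₀ (lp.single 2 y ξ) : ∀ _ : X₀, H) x ≠ 0) →
      Metric.infDist (x : X) Y₀ ≤ r₀ ∧ Metric.infDist (y : X) Y₀ ≤ r₀) ∧
    (∀ x y : X₀, (∃ ξ : H, (a₁ (lp.single 2 y ξ) : ∀ _ : X₀, H) x ≠ 0) →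
      Metric.infDist (x : X) Y₁ ≤ r₀ ∧ Metric.infDist (y : X) Y₁ ≤ r₀) ∧
    -- (iv) norm bounds
    ‖a₀‖ ≤ 4 * ‖a‖ ∧ ‖a₁‖ ≤ 3 * ‖a‖ := by
  classical
  -- every point is near Y₀ or near Y₁
  have hPQ : ∀ z : X, Metric.infDist z Y₀ ≤ r₀ ∨ Metric.infDist z Y₁ ≤ r₀ := by
    intro z
    have hz : z ∈ Y₀ ∪ Y₁ := hcover ▸ Set.mem_univ z
    rcases hz with h | h
    · left; rw [Metric.infDist_zero_of_mem h]; exact hr₀.le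
    · right; rw [Metric.infDist_zero_of_mem h]; exact hr₀.le
  -- matrix entries vanish between far pieces
  have hfar01 : ∀ (x y : X₀) (ξ : H), ¬ Metric.infDist (x:X) Y₁ ≤ r₀ →
      ¬ Metric.infDist (y:X) Y₀ ≤ r₀ → (a (lp.single 2 y ξ) : ∀ _ : X₀, H) x = 0 := by
    intro x y ξ hx hy
    by_contra h
    have hd := hprop x y ⟨ξ, h⟩
    have hy1 : (y:X) ∈ Y₁ := by
      rcases (hcover ▸ Set.mem_univ (y:X) : (y:X) ∈ Y₀ ∪ Y₁) with h0 | h1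
      · exact absurd (by rw [Metric.infDist_zero_of_mem h0]; exact hr₀.le) hy
      · exact h1
    have hle : Metric.infDist (x:X) Y₁ ≤ dist (x:X) (y:X) := Metric.infDist_le_dist_of_mem hy1
    exact hx (hle.trans hd.le)
  have hfar10 : ∀ (x y : X₀) (ξ : H), ¬ Metric.infDist (x:X) Y₀ ≤ r₀ →
      ¬ Metric.infDist (y:X) Y₁ ≤ r₀ → (a (lp.single 2 y ξ) : ∀ _ : X₀, H) x = 0 := by
    intro x y ξ hx hy
    by_contra h
    have hd := hprop x y ⟨ξ, h⟩
    have hy0 : (y:X) ∈ Y₀ := by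
      rcases (hcover ▸ Set.mem_univ (y:X) : (y:X) ∈ Y₀ ∪ Y₁) with h0 | h1
      · exact h0
      · exact absurd (by rw [Metric.infDist_zero_of_mem h1]; exact hr₀.le) hy
    have hle : Metric.infDist (x:X) Y₀ ≤ dist (x:X) (y:X) := Metric.infDist_le_dist_of_mem hy0
    exact hx (hle.trans hd.le)
  -- membership descriptions
  have hmem₀ : ∀ z : X, z ∈ Z₀ ↔
      (Metric.infDist z Y₀ ≤ r₀ ∧ ¬ Metric.infDist z Y₁ ≤ r₀) := by
    intro z; rw [hZ₀]; simp [Set.mem_diff]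
  have hmem₁ : ∀ z : X, z ∈ Z₁ ↔
      (Metric.infDist z Y₁ ≤ r₀ ∧ ¬ Metric.infDist z Y₀ ≤ r₀) := by
    intro z; rw [hZ₁]; simp [Set.mem_diff]
  have hmem₀₁ : ∀ z : X, z ∈ Z₀₁ ↔
      (Metric.infDist z Y₀ ≤ r₀ ∧ Metric.infDist z Y₁ ≤ r₀) := by
    intro z; rw [hZ₀₁]; simp [Set.mem_inter_iff]
  -- χ on singles
  have hχsingle : ∀ (B : Set X) (y : X₀) (ξ : H),
      χ B (lp.single 2 y ξ) = if (y:X) ∈ B then lp.single 2 y ξ else 0 := by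
    intro B y ξ
    apply lp.ext
    funext z
    rw [hχ, apply_ite (fun g : lp (fun _ : X₀ => H) 2 => (g : ∀ _ : X₀, H) z)]
    by_cases hzy : z = y
    · subst hzy
      split_ifs <;> simp_all [lp.coeFn_zero]
    · have hz0 : lp.single (E := fun _ : X₀ => H) 2 y ξ z = 0 :=
        lp.single_apply_ne (E := fun _ : X₀ => H) 2 y ξ hzy
      split_ifs <;> simp [hz0, lp.coeFn_zero, Pi.single_apply, hzy]
  -- matrix entries of the cut-downs
  have hcut : ∀ (A B : Set X) (y : X₀) (ξ : H) (x : X₀),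
      ((χ A ∘L a ∘L χ B) (lp.single 2 y ξ) : ∀ _ : X₀, H) x
        = if (x:X) ∈ A ∧ (y:X) ∈ B then (a (lp.single 2 y ξ) : ∀ _ : X₀, H) x else 0 := by
    intro A B y ξ x
    rw [ContinuousLinearMap.comp_apply, ContinuousLinearMap.comp_apply, hχsingle, hχ]
    by_cases hyB : (y:X) ∈ B
    · rw [if_pos hyB]
      by_cases hxA : (x:X) ∈ A
      · rw [if_pos hxA, if_pos ⟨hxA, hyB⟩]
      · rw [if_neg hxA, if_neg (fun h : (x:X) ∈ A ∧ (y:X) ∈ B => hxA h.1)]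
    · rw [if_neg hyB, map_zero, if_neg (fun h : (x:X) ∈ A ∧ (y:X) ∈ B => hyB h.2)]
      simp [lp.coeFn_zero]
  have ha₀e : ∀ (y : X₀) (ξ : H) (x : X₀),
      (a₀ (lp.single 2 y ξ) : ∀ _ : X₀, H) x =
        (if (x:X) ∈ Z₀ ∧ (y:X) ∈ Z₀ then (a (lp.single 2 y ξ) : ∀ _ : X₀, H) x else 0) +
        (if (x:X) ∈ Z₀ ∧ (y:X) ∈ Z₀₁ then (a (lp.single 2 y ξ) : ∀ _ : X₀, H) x else 0) +
        (if (x:X) ∈ Z₀₁ ∧ (y:X) ∈ Z₀ then (a (lp.single 2 y ξ) : ∀ _ : X₀, H) x else 0) +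
        (if (x:X) ∈ Z₀₁ ∧ (y:X) ∈ Z₀₁ then (a (lp.single 2 y ξ) : ∀ _ : X₀, H) x else 0) := by
    intro y ξ x
    rw [ha₀]
    simp only [ContinuousLinearMap.add_apply, lp.coeFn_add, Pi.add_apply]
    rw [hcut, hcut, hcut, hcut]
  have ha₁e : ∀ (y : X₀) (ξ : H) (x : X₀),
      (a₁ (lp.single 2 y ξ) : ∀ _ : X₀, H) x =
        (if (x:X) ∈ Z₁ ∧ (y:X) ∈ Z₁ then (a (lp.single 2 y ξ) : ∀ _ : X₀, H) x else 0) +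
        (if (x:X) ∈ Z₁ ∧ (y:X) ∈ Z₀₁ then (a (lp.single 2 y ξ) : ∀ _ : X₀, H) x else 0) +
        (if (x:X) ∈ Z₀₁ ∧ (y:X) ∈ Z₁ then (a (lp.single 2 y ξ) : ∀ _ : X₀, H) x else 0) := by
    intro y ξ x
    rw [ha₁]
    simp only [ContinuousLinearMap.add_apply, lp.coeFn_add, Pi.add_apply]
    rw [hcut, hcut, hcut]
  -- coordinatewise expansion of b f as a sum over singles
  have hsum : ∀ (b : lp (fun _ : X₀ => H) 2 →L[ℂ] lp (fun _ : X₀ => H) 2)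
      (f : lp (fun _ : X₀ => H) 2) (x : X₀),
      HasSum (fun y : X₀ => (b (lp.single 2 y ((f : ∀ _ : X₀, H) y)) : ∀ _ : X₀, H) x)
        ((b f : ∀ _ : X₀, H) x) := by
    intro b f x
    exact ((stmt13EvalCLM H x).comp b).hasSum (lp.hasSum_single (by norm_num) f)
  -- (i)
  have h1 : a = a₀ + a₁ := by
    ext f x
    have hA := hsum a f x
    have h01 := (hsum a₀ f x).add (hsum a₁ f x)
    have heq : ∀ y : X₀,
        (a₀ (lp.single 2 y ((f : ∀ _ : X₀, H) y)) : ∀ _ : X₀, H) x +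
          (a₁ (lp.single 2 y ((f : ∀ _ : X₀, H) y)) : ∀ _ : X₀, H) x =
        (a (lp.single 2 y ((f : ∀ _ : X₀, H) y)) : ∀ _ : X₀, H) x := by
      intro y
      rw [ha₀e, ha₁e]
      by_cases hpx : Metric.infDist (x:X) Y₀ ≤ r₀ <;>
      by_cases hqx : Metric.infDist (x:X) Y₁ ≤ r₀ <;>
      by_cases hpy : Metric.infDist (y:X) Y₀ ≤ r₀ <;>
      by_cases hqy : Metric.infDist (y:X) Y₁ ≤ r₀ <;>
        simp only [hmem₀, hmem₁, hmem₀₁, hpx, hqx, hpy, hqy, not_true, not_false_iff,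
          true_and, and_true, false_and, and_false, and_self, if_true, if_false,
          not_false_eq_true, not_true_eq_false, zero_add, add_zero] <;>
        first
          | rfl
          | exact (hfar01 x y _ hqx hpy).symm
          | exact (hfar10 x y _ hpx hqy).symm
          | exact (hPQ (x:X)).elim (fun h => absurd h hpx) (fun h => absurd h hqx)
          | exact (hPQ (y:X)).elim (fun h => absurd h hpy) (fun h => absurd h hqy)
    have h01' : HasSum (fun y : X₀ =>
        (a (lp.single 2 y ((f : ∀ _ : X₀, H) y)) : ∀ _ : X₀, H) x)
        (((a₀ + a₁) f : ∀ _ : X₀, H) x) := by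
      simp only [ContinuousLinearMap.add_apply, lp.coeFn_add, Pi.add_apply]
      simpa only [heq] using h01
    exact hA.unique h01'
  -- norm bound for χ
  have h2pos : (0:ℝ) < (2:ℝ≥0∞).toReal := by norm_num
  have hχn : ∀ S : Set X, ‖χ S‖ ≤ 1 := by
    intro S
    refine ContinuousLinearMap.opNorm_le_bound _ zero_le_one fun f => ?_
    rw [one_mul]
    have hle : ‖χ S f‖ ^ (2:ℝ≥0∞).toReal ≤ ‖f‖ ^ (2:ℝ≥0∞).toReal := by
      refine hasSum_le (fun i => ?_) (lp.hasSum_norm h2pos (χ S f)) (lp.hasSum_norm h2pos f)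
      refine Real.rpow_le_rpow (norm_nonneg _) ?_ h2pos.le
      rw [hχ]
      split_ifs
      · exact le_rfl
      · simpa using norm_nonneg _
    by_contra h
    push_neg at h
    exact absurd hle (not_le.mpr (Real.rpow_lt_rpow (norm_nonneg _) h h2pos))
  have hcompn : ∀ (A B : Set X), ‖χ A ∘L a ∘L χ B‖ ≤ ‖a‖ := by
    intro A B
    have h2 : ‖a ∘L χ B‖ ≤ ‖a‖ := by
      refine le_trans (ContinuousLinearMap.opNorm_comp_le a (χ B)) ?_
      calc ‖a‖ * ‖χ B‖ ≤ ‖a‖ * 1 := mul_le_mul_of_nonneg_left (hχn B) (norm_nonneg a)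
        _ = ‖a‖ := mul_one _
    refine le_trans (ContinuousLinearMap.opNorm_comp_le (χ A) (a ∘L χ B)) ?_
    calc ‖χ A‖ * ‖a ∘L χ B‖ ≤ 1 * ‖a‖ :=
          mul_le_mul (hχn A) h2 (norm_nonneg _) zero_le_one
      _ = ‖a‖ := one_mul _
  have hn₀ : ‖a₀‖ ≤ 4 * ‖a‖ := by
    rw [ha₀]
    refine le_trans (norm_add_le _ _) (le_trans (add_le_add
      (le_trans (norm_add_le _ _) (add_le_add
        (le_trans (norm_add_le _ _) (add_le_add (hcompn Z₀ Z₀) (hcompn Z₀ Z₀₁)))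
        (hcompn Z₀₁ Z₀)))
      (hcompn Z₀₁ Z₀₁)) (by linarith))
  have hn₁ : ‖a₁‖ ≤ 3 * ‖a‖ := by
    rw [ha₁]
    refine le_trans (norm_add_le _ _) (le_trans (add_le_add
      (le_trans (norm_add_le _ _) (add_le_add (hcompn Z₁ Z₁) (hcompn Z₁ Z₀₁)))
      (hcompn Z₀₁ Z₁)) (by linarith))
  refine ⟨h1, ?_, ?_, ?_, ?_, hn₀, hn₁⟩
  · rintro x y ⟨ξ, hξ⟩
    refine hprop x y ⟨ξ, fun hv => hξ ?_⟩
    rw [ha₀e, hv]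
    simp
  · rintro x y ⟨ξ, hξ⟩
    refine hprop x y ⟨ξ, fun hv => hξ ?_⟩
    rw [ha₁e, hv]
    simp
  · rintro x y ⟨ξ, hξ⟩
    rw [ha₀e] at hξ
    have hc : ((x:X) ∈ Z₀ ∧ (y:X) ∈ Z₀) ∨ ((x:X) ∈ Z₀ ∧ (y:X) ∈ Z₀₁) ∨
        ((x:X) ∈ Z₀₁ ∧ (y:X) ∈ Z₀) ∨ ((x:X) ∈ Z₀₁ ∧ (y:X) ∈ Z₀₁) := by
      by_contra hcon
      refine hξ ?_
      rw [if_neg (fun h => hcon (Or.inl h)), if_neg (fun h => hcon (Or.inr (Or.inl h))),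
        if_neg (fun h => hcon (Or.inr (Or.inr (Or.inl h)))),
        if_neg (fun h => hcon (Or.inr (Or.inr (Or.inr h))))]
      simp
    rcases hc with ⟨h, h'⟩ | ⟨h, h'⟩ | ⟨h, h'⟩ | ⟨h, h'⟩ <;>
      exact ⟨by first | exact ((hmem₀ _).mp h).1 | exact ((hmem₀₁ _).mp h).1,
        by first | exact ((hmem₀ _).mp h').1 | exact ((hmem₀₁ _).mp h').1⟩
  · rintro x y ⟨ξ, hξ⟩
    rw [ha₁e] at hξ
    have hc : ((x:X) ∈ Z₁ ∧ (y:X) ∈ Z₁) ∨ ((x:X) ∈ Z₁ ∧ (y:X) ∈ Z₀₁) ∨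
        ((x:X) ∈ Z₀₁ ∧ (y:X) ∈ Z₁) := by
      by_contra hcon
      refine hξ ?_
      rw [if_neg (fun h => hcon (Or.inl h)), if_neg (fun h => hcon (Or.inr (Or.inl h))),
        if_neg (fun h => hcon (Or.inr (Or.inr h)))]
      simp
    rcases hc with ⟨h, h'⟩ | ⟨h, h'⟩ | ⟨h, h'⟩ <;>
      exact ⟨by first | exact ((hmem₁ _).mp h).1 | exact ((hmem₀₁ _).mp h).2,
        by first | exact ((hmem₁ _).mp h').1 | exact ((hmem₀₁ _).mp h').2⟩
end

section
/- Let G, H be finitely generated groups with free product G * H (word metric for S_G ∪ S_H), Bass–Serre tree T, and projection π : G*H → T. Fix w ∈ G*H and n ∈ ℕ, and let T_n^w denote the subtree of vertices of T of combinatorial depth ≤ n below the vertex π(w) in the direction away from the root (as defined via reduced words with prefix below w). Then the preimage π^{-1}(T_{n+1}^w) decomposes as π^{-1}(T_{n+1}^w) = π^{-1}(T_n^w) ⊔ ⨆_{v} C_v, where v ranges over the vertices of T at distance exactly n+1 from π(w) in T_{n+1}^w, and each C_v = π^{-1}({v}) is isometric — via left translation in G*H — to G \ {e_G} or H \ {e_H}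 shifted by a coset representative; moreover for distinct such v, v', and y ∈ C_v, y' ∈ C_{v'}, the distance d(y, y') equals d(y, u) + d(u, u') + d(u', y') where u, u' are the branch points (coset representatives) of v, v'. -/
open Monoid

variable (G H : Type*) [Group G] [Group H]

/-- Letters of the free product `G * H`, and their evaluation in `G * H`. -/
def evalLetter : G ⊕ H → Coprod G H :=
  Sum.elim (fun g => (Coprod.inl g : Coprod G H)) (fun h => (Coprod.inr h : Coprod G H))

/-- Product of a list of letters in `G * H`. -/
def listProd (l : List (G ⊕ H)) : Coprod G H := (l.map (evalLetter G H)).prod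

/-- A list of letters is reduced. -/
def Reduced (l : List (G ⊕ H)) : Prop :=
  (∀ a ∈ l, a ≠ Sum.inl (1 : G) ∧ a ≠ Sum.inr (1 : H)) ∧
  l.Chain' (fun a b => a.isLeft ≠ b.isLeft)

/-- Word metric for the generating set `S`. -/
noncomputable def wordDist {M : Type*} [Group M] (S : Set M) (x y : M) : ℕ :=
  sInf {n | ∃ l : List M, (∀ a ∈ l, a ∈ S) ∧ l.prod = x⁻¹ * y ∧ l.length = n}

section Aux

variable {G H : Type*} [Group G] [Group H]

/-- letterwise inverse -/
def linv : G ⊕ H → G ⊕ H := Sum.map (·⁻¹) (·⁻¹)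

@[simp] lemma isLeft_linv (a : G ⊕ H) : (linv a).isLeft = a.isLeft := by
  cases a <;> rfl

@[simp] lemma eval_linv (a : G ⊕ H) :
    evalLetter G H (linv a) = (evalLetter G H a)⁻¹ := by
  cases a <;> simp [linv, evalLetter]

@[simp] lemma listProd_nil : listProd G H ([] : List (G ⊕ H)) = 1 := rfl

@[simp] lemma listProd_cons (a : G ⊕ H) (l : List (G ⊕ H)) :
    listProd G H (a :: l) = evalLetter G H a * listProd G H l := by
  simp [listProd]

@[simp] lemma listProd_append (l₁ l₂ : List (G ⊕ H)) :
    listProd G H (l₁ ++ l₂) = listProd G H l₁ * listProd G H l₂ := by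
  simp [listProd]

@[simp] lemma listProd_singleton (a : G ⊕ H) :
    listProd G H [a] = evalLetter G H a := by simp [listProd]

lemma listProd_revinv (l : List (G ⊕ H)) :
    listProd G H ((l.map linv).reverse) = (listProd G H l)⁻¹ := by
  induction l with
  | nil => simp
  | cons a t ih =>
      rw [List.map_cons, List.reverse_cons, listProd_append, ih, listProd_singleton,
        eval_linv, listProd_cons, mul_inv_rev]

lemma Reduced.of_sublist {l l' : List (G ⊕ H)} (h : Reduced G H l)
    (hs : l' <:+: l) : Reduced G H l' :=
  ⟨fun a ha => h.1 a (hs.subset ha), h.2.infix hs⟩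

lemma reduced_revinv {l : List (G ⊕ H)} (h : Reduced G H l) :
    Reduced G H ((l.map linv).reverse) := by
  constructor
  · intro a ha
    simp only [List.mem_reverse, List.mem_map] at ha
    obtain ⟨b, hb, rfl⟩ := ha
    have hb1 := h.1 b hb
    cases b with
    | inl g => exact ⟨by simpa [linv] using hb1.1, by simp [linv]⟩
    | inr x => exact ⟨by simp [linv], by simpa [linv] using hb1.2⟩
  · show List.IsChain _ _; rw [List.isChain_reverse, List.isChain_map]
    exact h.2.imp fun a b hab => by simpa [Function.flip_def] using (Ne.symm hab)


section WD
variable {M : Type*} [Group M] {S : Set M}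

lemma wordDist_le {x y : M} {l : List M} (hl : ∀ a ∈ l, a ∈ S) (hp : l.prod = x⁻¹ * y) :
    wordDist S x y ≤ l.length := Nat.sInf_le ⟨l, hl, hp, rfl⟩

lemma wordDist_congr {x y x' y' : M} (h : x⁻¹ * y = x'⁻¹ * y') :
    wordDist S x y = wordDist S x' y' := by unfold wordDist; rw [h]

@[simp] lemma wordDist_self (x : M) : wordDist S x x = 0 :=
  Nat.le_zero.mp (wordDist_le (l := []) (by simp) (by simp))

lemma exists_geodesic (hgen : Subgroup.closure S = ⊤) (hsym : ∀ s ∈ S, s⁻¹ ∈ S) (x y : M) :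
    ∃ l : List M, (∀ a ∈ l, a ∈ S) ∧ l.prod = x⁻¹ * y ∧ l.length = wordDist S x y := by
  have hx : x⁻¹ * y ∈ Submonoid.closure (S ∪ S⁻¹) := by
    rw [← Subgroup.closure_toSubmonoid, hgen]; trivial
  obtain ⟨l, hl, hp⟩ := Submonoid.exists_list_of_mem_closure hx
  have hne : {n | ∃ l : List M, (∀ a ∈ l, a ∈ S) ∧ l.prod = x⁻¹ * y ∧ l.length = n}.Nonempty :=
    ⟨l.length, l, fun a ha => (hl a ha).elim id (fun h => by simpa using hsym _ h), hp, rfl⟩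
  exact Nat.sInf_mem hne

lemma wordDist_comm (hsym : ∀ s ∈ S, s⁻¹ ∈ S) (x y : M) :
    wordDist S x y = wordDist S y x := by
  have key : ∀ a b : M, {n | ∃ l : List M, (∀ c ∈ l, c ∈ S) ∧ l.prod = a⁻¹ * b ∧ l.length = n} ⊆
      {n | ∃ l : List M, (∀ c ∈ l, c ∈ S) ∧ l.prod = b⁻¹ * a ∧ l.length = n} := by
    rintro a b n ⟨l, hl, hp, rfl⟩
    refine ⟨(l.map (·⁻¹)).reverse, ?_, ?_, by simp⟩
    · intro c hc
      simp only [List.mem_reverse, List.mem_map] at hc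
      obtain ⟨d, hd, rfl⟩ := hc
      exact hsym d (hl d hd)
    · rw [← List.prod_inv_reverse, hp, mul_inv_rev, inv_inv]
  unfold wordDist
  exact congrArg sInf (le_antisymm (key x y) (key y x))

end WD

universe u v

lemma reduced_ne_one {G : Type u} {H : Type v} [Group G] [Group H]
    {l : List (G ⊕ H)} (hl : Reduced G H l) (hne : l ≠ []) :
    listProd G H l ≠ 1 := by
  classical
  set M : Bool → Type (max u v) := fun b => cond b (ULift.{v} G) (ULift.{u} H) with hM
  letI instM : ∀ b, Group (M b) := fun b =>
    Bool.rec (ULift.group : Group (ULift.{u} H)) (ULift.group : Group (ULift.{v} G)) b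
  let φ : Coprod G H →* CoprodI M :=
    Coprod.lift
      ((CoprodI.of (i := true)).comp (MulEquiv.ulift.symm : G ≃* ULift G).toMonoidHom)
      ((CoprodI.of (i := false)).comp (MulEquiv.ulift.symm : H ≃* ULift H).toMonoidHom)
  let f : G ⊕ H → (Σ b, M b) :=
    Sum.elim (fun g => ⟨true, ULift.up g⟩) (fun h => ⟨false, ULift.up h⟩)
  have hfst : ∀ a : G ⊕ H, (f a).1 = a.isLeft := by intro a; cases a <;> rfl
  let w : CoprodI.Word M :=
    { toList := l.map f
      ne_one := by
        intro p hp
        simp only [List.mem_map] at hp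
        obtain ⟨a, ha, rfl⟩ := hp
        have h1 := hl.1 a ha
        cases a with
        | inl g =>
            intro hg1
            exact h1.1 (by rw [show g = 1 from congrArg ULift.down hg1])
        | inr h =>
            intro hg1
            exact h1.2 (by rw [show h = 1 from congrArg ULift.down hg1])
      chain_ne := by
        rw [List.isChain_map]
        exact hl.2.imp fun a b hab => by rw [hfst, hfst]; exact fun h => hab (by exact_mod_cast h) }
  have hprod : w.prod = φ (listProd G H l) := by
    rw [CoprodI.Word.prod, listProd]
    show (List.map (fun p => CoprodI.of p.2) (l.map f)).prod = _
    rw [List.map_map, map_list_prod, List.map_map]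
    congr 1
    apply List.map_congr_left
    intro a _
    cases a with
    | inl g => simp [f, φ, evalLetter, Function.comp]; rfl
    | inr h => simp [f, φ, evalLetter, Function.comp]; rfl
  intro h1
  have : w.prod = (CoprodI.Word.empty : CoprodI.Word M).prod := by
    rw [hprod, h1, map_one, CoprodI.Word.prod_empty]
  have hw : w = CoprodI.Word.empty := 
    letI hdec : ∀ i, DecidableEq (M i) := fun _ => Classical.decEq _
    (CoprodI.Word.equiv (M := M)).symm.injective this
  have : l.map f = [] := congrArg CoprodI.Word.toList hw
  exact hne (List.map_eq_nil_iff.mp this)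


section Inj
variable {G H : Type*} [Group G] [Group H]

lemma reduced_append {l₁ l₂ : List (G ⊕ H)} (h₁ : Reduced G H l₁) (h₂ : Reduced G H l₂)
    (hj : ∀ a ∈ l₁.getLast?, ∀ b ∈ l₂.head?, a.isLeft ≠ b.isLeft) :
    Reduced G H (l₁ ++ l₂) := by
  refine ⟨fun a ha => ?_, List.isChain_append.mpr ⟨h₁.2, h₂.2, hj⟩⟩
  rcases List.mem_append.mp ha with h | h
  exacts [h₁.1 a h, h₂.1 a h]

lemma reduced_replace_head {a b : G ⊕ H} {t : List (G ⊕ H)} (h : Reduced G H (a :: t))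
    (hb : b ≠ Sum.inl 1 ∧ b ≠ Sum.inr 1) (hside : b.isLeft = a.isLeft) :
    Reduced G H (b :: t) := by
  refine ⟨fun c hc => ?_, List.isChain_cons.mpr ⟨?_, (h.2.suffix ⟨[a], rfl⟩ : _)⟩⟩
  · rcases List.mem_cons.mp hc with rfl | hc
    exacts [hb, h.1 c (List.mem_cons_of_mem a hc)]
  · intro y hy
    rw [hside]
    exact (List.isChain_cons.mp h.2).1 y hy

lemma reduced_glue {a b : G ⊕ H} {t t' : List (G ⊕ H)} (h : Reduced G H (a :: t))
    (h' : Reduced G H (b :: t')) (hba : b.isLeft = a.isLeft) :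
    Reduced G H ((t.map linv).reverse ++ b :: t') := by
  refine reduced_append (reduced_revinv (h.of_sublist ⟨[a], [], by simp⟩)) h' ?_
  intro x hx y hy
  rw [List.getLast?_reverse] at hx
  rcases t with _ | ⟨c, t⟩
  · simp at hx
  · simp only [List.map_cons, List.head?_cons, Option.mem_def, Option.some.injEq] at hx
    subst hx
    simp only [List.head?_cons, Option.mem_def, Option.some.injEq] at hy
    subst hy
    rw [isLeft_linv, hba]
    exact fun e => (List.isChain_cons.mp h.2).1 c rfl e.symm

lemma listProd_glue {t t' : List (G ⊕ H)} {b : G ⊕ H} {x y : Coprod G H}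
    (hb : evalLetter G H b = x⁻¹ * y) :
    listProd G H ((t.map linv).reverse ++ b :: t') =
      (x * listProd G H t)⁻¹ * (y * listProd G H t') := by
  rw [listProd_append, listProd_revinv, listProd_cons, hb]
  group

lemma listProd_injective : ∀ {l l' : List (G ⊕ H)}, Reduced G H l → Reduced G H l' →
    listProd G H l = listProd G H l' → l = l' := by
  intro l
  induction l with
  | nil =>
      intro l' _ h' hp
      rcases l' with _ | ⟨a', t'⟩
      · rfl
      · exact absurd hp.symm (reduced_ne_one h' (by simp))
  | cons a t ih =>
      intro l' h h' hp
      rcases l' with _ | ⟨a', t'⟩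
      · exact absurd hp (reduced_ne_one h (by simp))
      by_cases haa : a = a'
      · subst haa
        have ht : listProd G H t = listProd G H t' := by
          have := hp
          rw [listProd_cons, listProd_cons] at this
          exact mul_left_cancel this
        rw [ih (h.of_sublist ⟨[a], [], by simp⟩) (h'.of_sublist ⟨[a], [], by simp⟩) ht]
      exfalso
      by_cases hside : a'.isLeft = a.isLeft
      · -- same side : merge the heads
        have key : ∀ b : G ⊕ H, b ≠ Sum.inl 1 ∧ b ≠ Sum.inr 1 → b.isLeft = a.isLeft →
            evalLetter G H b = (evalLetter G H a)⁻¹ * evalLetter G H a' → False := by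
          intro b hb1 hbs hbe
          have hred := reduced_glue h (reduced_replace_head h' hb1 (hbs.trans hside.symm)) hbs
          refine reduced_ne_one hred (by simp) ?_
          rw [listProd_glue hbe, ← listProd_cons, ← listProd_cons, hp]
          group
        rcases a with g | x <;> rcases a' with g' | x'
        · refine key (Sum.inl (g⁻¹ * g')) ⟨?_, by simp⟩ rfl (by simp [evalLetter])
          simpa using fun e => haa (by rw [inv_mul_eq_one.mp e])
        · simp at hside
        · simp at hside
        · refine key (Sum.inr (x⁻¹ * x')) ⟨by simp, ?_⟩ rfl (by simp [evalLetter])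
          simpa using fun e => haa (by rw [inv_mul_eq_one.mp e])
      · -- different sides : no cancellation at all
        have h'' : Reduced G H (linv a :: a' :: t') := by
          refine ⟨fun c hc => ?_, List.isChain_cons.mpr ⟨?_, h'.2⟩⟩
          · rcases List.mem_cons.mp hc with rfl | hc
            · exact (reduced_revinv (h.of_sublist (l' := [a]) ⟨[], t, by simp⟩)).1 (linv a) (by simp)
            · exact h'.1 c hc
          · intro y hy
            simp only [List.head?_cons, Option.mem_def, Option.some.injEq] at hy
            subst hy
            rw [isLeft_linv]
            exact fun e => hside (e.symm)
        have hred := reduced_glue h h'' (isLeft_linv a)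
        refine reduced_ne_one hred (by simp) ?_
        rw [listProd_glue (x := evalLetter G H a) (y := 1) (by simp), one_mul,
          ← listProd_cons, hp]
        group

end Inj


section Master
variable {G H : Type*} [Group G] [Group H]
variable {SG : Set G} {SH : Set H} {S : Set (Coprod G H)}

/-- factor-wise distance to the identity -/
noncomputable def dfac (SG : Set G) (SH : Set H) : G ⊕ H → ℕ :=
  Sum.elim (fun g => wordDist SG 1 g) (fun h => wordDist SH 1 h)

lemma dfac_linv (hSGsym : ∀ s ∈ SG, s⁻¹ ∈ SG) (hSHsym : ∀ s ∈ SH, s⁻¹ ∈ SH) (a : G ⊕ H) :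
    dfac SG SH (linv a) = dfac SG SH a := by
  cases a with
  | inl g =>
      show wordDist SG 1 g⁻¹ = wordDist SG 1 g
      rw [wordDist_comm hSGsym]
      exact wordDist_congr (by group)
  | inr h =>
      show wordDist SH 1 h⁻¹ = wordDist SH 1 h
      rw [wordDist_comm hSHsym]
      exact wordDist_congr (by group)

lemma sum_dfac_le_of_eq (hSGsym : ∀ s ∈ SG, s⁻¹ ∈ SG) (hSGgen : Subgroup.closure SG = ⊤)
    (hSHsym : ∀ s ∈ SH, s⁻¹ ∈ SH) (hSHgen : Subgroup.closure SH = ⊤)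
    (hS : S = (Coprod.inl : G →* Coprod G H) '' SG ∪ (Coprod.inr : H →* Coprod G H) '' SH) :
    ∀ m : List (Coprod G H), (∀ x ∈ m, x ∈ S) → ∀ l : List (G ⊕ H), Reduced G H l →
      listProd G H l = m.prod → (l.map (dfac SG SH)).sum ≤ m.length := by
  intro m
  induction m with
  | nil =>
      intro _ l hl hp
      have hln : l = [] := by
        by_contra hne
        exact reduced_ne_one hl hne (by simpa using hp)
      simp [hln]
  | cons x m ih =>
      intro hm l hl hp
      have hmS : ∀ y ∈ m, y ∈ S := fun y hy => hm y (List.mem_cons_of_mem x hy)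
      rw [List.prod_cons] at hp
      have hx := hm x List.mem_cons_self
      rw [hS] at hx
      rcases hx with ⟨g, hgS, rfl⟩ | ⟨h0, hhS, rfl⟩
      · -- first letter from G
        by_cases hg1 : g = 1
        · subst hg1
          rw [map_one, one_mul] at hp
          exact (ih hmS l hl hp).trans (Nat.le_succ _)
        rcases l with _ | ⟨a, t⟩
        · simp
        rcases a with g' | h'
        · by_cases hgg : g⁻¹ * g' = 1
          · -- cancellation
            have hg' : g' = g := (inv_mul_eq_one.mp hgg).symm
            have ht : Reduced G H t := hl.of_sublist ⟨[Sum.inl g'], [], by simp⟩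
            have hpt : listProd G H t = m.prod := by
              have h2 := hp
              rw [listProd_cons, hg'] at h2
              exact mul_left_cancel h2
            have h1 : dfac SG SH (Sum.inl g') ≤ 1 := by
              refine wordDist_le (l := [g']) ?_ (by simp)
              intro c hc
              rw [List.mem_singleton.mp hc, hg']
              exact hgS
            have h2 := ih hmS t ht hpt
            simp only [List.map_cons, List.sum_cons, List.length_cons]
            omega
          · -- merge heads
            have hlb : Reduced G H (Sum.inl (g⁻¹ * g') :: t) :=
              reduced_replace_head hl ⟨by simpa using hgg, by simp⟩ rfl
            have hpb : listProd G H (Sum.inl (g⁻¹ * g') :: t) = m.prod := by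
              have hbe : evalLetter G H (Sum.inl (g⁻¹ * g') : G ⊕ H) =
                  (Coprod.inl g)⁻¹ * evalLetter G H (Sum.inl g' : G ⊕ H) := by
                simp [evalLetter]
              rw [listProd_cons, hbe, mul_assoc, ← listProd_cons, hp, inv_mul_cancel_left]
            have hd : dfac SG SH (Sum.inl g') ≤ dfac SG SH (Sum.inl (g⁻¹ * g')) + 1 := by
              show wordDist SG 1 g' ≤ wordDist SG 1 (g⁻¹ * g') + 1
              obtain ⟨l₀, hl₀S, hl₀p, hl₀len⟩ := exists_geodesic hSGgen hSGsym 1 (g⁻¹ * g')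
              refine le_trans (wordDist_le (l := g :: l₀) ?_ ?_) (by simp [hl₀len])
              · intro c hc
                rcases List.mem_cons.mp hc with rfl | hc
                exacts [hgS, hl₀S c hc]
              · rw [List.prod_cons, hl₀p]; group
            have h2 := ih hmS _ hlb hpb
            simp only [List.map_cons, List.sum_cons, List.length_cons] at h2 ⊢
            omega
        · -- head from H : prepend
          have hl2 : Reduced G H (Sum.inl g⁻¹ :: Sum.inr h' :: t) := by
            refine ⟨fun c hc => ?_, List.isChain_cons.mpr ⟨by simp, hl.2⟩⟩
            rcases List.mem_cons.mp hc with rfl | hc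
            · exact ⟨by simp [hg1], by simp⟩
            · exact hl.1 c hc
          have hp2 : listProd G H (Sum.inl g⁻¹ :: Sum.inr h' :: t) = m.prod := by
            rw [listProd_cons, hp]
            show Coprod.inl g⁻¹ * _ = _
            rw [map_inv, inv_mul_cancel_left]
          have h2 := ih hmS _ hl2 hp2
          simp only [List.map_cons, List.sum_cons, List.length_cons] at h2 ⊢
          omega
      · -- first letter from H
        by_cases hg1 : h0 = 1
        · subst hg1
          rw [map_one, one_mul] at hp
          exact (ih hmS l hl hp).trans (Nat.le_succ _)
        rcases l with _ | ⟨a, t⟩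
        · simp
        rcases a with g' | h'
        · -- head from G : prepend
          have hl2 : Reduced G H (Sum.inr h0⁻¹ :: Sum.inl g' :: t) := by
            refine ⟨fun c hc => ?_, List.isChain_cons.mpr ⟨by simp, hl.2⟩⟩
            rcases List.mem_cons.mp hc with rfl | hc
            · exact ⟨by simp, by simp [hg1]⟩
            · exact hl.1 c hc
          have hp2 : listProd G H (Sum.inr h0⁻¹ :: Sum.inl g' :: t) = m.prod := by
            rw [listProd_cons, hp]
            show Coprod.inr h0⁻¹ * _ = _
            rw [map_inv, inv_mul_cancel_left]
          have h2 := ih hmS _ hl2 hp2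
          simp only [List.map_cons, List.sum_cons, List.length_cons] at h2 ⊢
          omega
        · by_cases hgg : h0⁻¹ * h' = 1
          · have hg' : h' = h0 := (inv_mul_eq_one.mp hgg).symm
            have ht : Reduced G H t := hl.of_sublist ⟨[Sum.inr h'], [], by simp⟩
            have hpt : listProd G H t = m.prod := by
              have h2 := hp
              rw [listProd_cons, hg'] at h2
              exact mul_left_cancel h2
            have h1 : dfac SG SH (Sum.inr h') ≤ 1 := by
              refine wordDist_le (l := [h']) ?_ (by simp)
              intro c hc
              rw [List.mem_singleton.mp hc, hg']
              exact hhS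
            have h2 := ih hmS t ht hpt
            simp only [List.map_cons, List.sum_cons, List.length_cons]
            omega
          · have hlb : Reduced G H (Sum.inr (h0⁻¹ * h') :: t) :=
              reduced_replace_head hl ⟨by simp, by simpa using hgg⟩ rfl
            have hpb : listProd G H (Sum.inr (h0⁻¹ * h') :: t) = m.prod := by
              have hbe : evalLetter G H (Sum.inr (h0⁻¹ * h') : G ⊕ H) =
                  (Coprod.inr h0)⁻¹ * evalLetter G H (Sum.inr h' : G ⊕ H) := by
                simp [evalLetter]
              rw [listProd_cons, hbe, mul_assoc, ← listProd_cons, hp, inv_mul_cancel_left]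
            have hd : dfac SG SH (Sum.inr h') ≤ dfac SG SH (Sum.inr (h0⁻¹ * h')) + 1 := by
              show wordDist SH 1 h' ≤ wordDist SH 1 (h0⁻¹ * h') + 1
              obtain ⟨l₀, hl₀S, hl₀p, hl₀len⟩ := exists_geodesic hSHgen hSHsym 1 (h0⁻¹ * h')
              refine le_trans (wordDist_le (l := h0 :: l₀) ?_ ?_) (by simp [hl₀len])
              · intro c hc
                rcases List.mem_cons.mp hc with rfl | hc
                exacts [hhS, hl₀S c hc]
              · rw [List.prod_cons, hl₀p]; group
            have h2 := ih hmS _ hlb hpb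
            simp only [List.map_cons, List.sum_cons, List.length_cons] at h2 ⊢
            omega

lemma exists_S_word (hSGsym : ∀ s ∈ SG, s⁻¹ ∈ SG) (hSGgen : Subgroup.closure SG = ⊤)
    (hSHsym : ∀ s ∈ SH, s⁻¹ ∈ SH) (hSHgen : Subgroup.closure SH = ⊤)
    (hS : S = (Coprod.inl : G →* Coprod G H) '' SG ∪ (Coprod.inr : H →* Coprod G H) '' SH)
    (l : List (G ⊕ H)) :
    ∃ m : List (Coprod G H), (∀ x ∈ m, x ∈ S) ∧ m.prod = listProd G H l ∧
      m.length = (l.map (dfac SG SH)).sum := by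
  induction l with
  | nil => exact ⟨[], by simp, by simp, by simp⟩
  | cons a t ih =>
      obtain ⟨m, hm, hmp, hml⟩ := ih
      cases a with
      | inl g =>
          obtain ⟨l₀, hl₀S, hl₀p, hl₀len⟩ := exists_geodesic hSGgen hSGsym 1 g
          refine ⟨l₀.map (Coprod.inl : G →* Coprod G H) ++ m, ?_, ?_, ?_⟩
          · intro c hc
            rcases List.mem_append.mp hc with hc | hc
            · obtain ⟨d, hd, rfl⟩ := List.mem_map.mp hc
              rw [hS]; exact Or.inl ⟨d, hl₀S d hd, rfl⟩
            · exact hm c hc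
          · rw [List.prod_append, hmp, ← map_list_prod, hl₀p, listProd_cons]
            simp [evalLetter]
          · simp [hml, hl₀len, dfac]
      | inr h =>
          obtain ⟨l₀, hl₀S, hl₀p, hl₀len⟩ := exists_geodesic hSHgen hSHsym 1 h
          refine ⟨l₀.map (Coprod.inr : H →* Coprod G H) ++ m, ?_, ?_, ?_⟩
          · intro c hc
            rcases List.mem_append.mp hc with hc | hc
            · obtain ⟨d, hd, rfl⟩ := List.mem_map.mp hc
              rw [hS]; exact Or.inr ⟨d, hl₀S d hd, rfl⟩
            · exact hm c hc
          · rw [List.prod_append, hmp, ← map_list_prod, hl₀p, listProd_cons]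
            simp [evalLetter]
          · simp [hml, hl₀len, dfac]

/-- The master formula : the word distance of a reduced word to `1` is the sum of the
factor distances of its letters. -/
lemma master (hSGsym : ∀ s ∈ SG, s⁻¹ ∈ SG) (hSGgen : Subgroup.closure SG = ⊤)
    (hSHsym : ∀ s ∈ SH, s⁻¹ ∈ SH) (hSHgen : Subgroup.closure SH = ⊤)
    (hS : S = (Coprod.inl : G →* Coprod G H) '' SG ∪ (Coprod.inr : H →* Coprod G H) '' SH)
    {l : List (G ⊕ H)} (hl : Reduced G H l) :
    wordDist S 1 (listProd G H l) = (l.map (dfac SG SH)).sum := by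
  obtain ⟨m, hm, hmp, hml⟩ := exists_S_word hSGsym hSGgen hSHsym hSHgen hS l
  refine le_antisymm (hml ▸ wordDist_le hm (by rw [hmp, inv_one, one_mul])) ?_
  refine le_csInf ⟨m.length, m, hm, by rw [hmp, inv_one, one_mul], rfl⟩ ?_
  rintro b ⟨m', hm', hmp', rfl⟩
  exact sum_dfac_le_of_eq hSGsym hSGgen hSHsym hSHgen hS m' hm' l hl
    (by rw [hmp', inv_one, one_mul])

end Master


section Small
variable {G H : Type*} [Group G] [Group H]

lemma exists_split {α : Type*} : ∀ {s s' : List α}, s.length = s'.length → s ≠ s' →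
    ∃ p c r c' r', s = p ++ c :: r ∧ s' = p ++ c' :: r' ∧ c ≠ c' := by
  intro s
  induction s with
  | nil =>
      intro s' hl hne
      cases s' with
      | nil => exact absurd rfl hne
      | cons a' t' => simp at hl
  | cons a t ih =>
      intro s' hl hne
      cases s' with
      | nil => simp at hl
      | cons a' t' =>
          by_cases haa : a = a'
          · subst haa
            have ht : t ≠ t' := fun e => hne (by rw [e])
            obtain ⟨p, c, r, c', r', h1, h2, h3⟩ := ih (by simpa using hl) ht
            exact ⟨a :: p, c, r, c', r', by simp [h1], by simp [h2], h3⟩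
          · exact ⟨[], a, t, a', t', rfl, rfl, haa⟩

/-- merge two same-side letters into `c⁻¹ c'` -/
def lmerge : G ⊕ H → G ⊕ H → G ⊕ H
  | Sum.inl g, Sum.inl g' => Sum.inl (g⁻¹ * g')
  | Sum.inr h, Sum.inr h' => Sum.inr (h⁻¹ * h')
  | Sum.inl g, Sum.inr _ => Sum.inl g
  | Sum.inr h, Sum.inl _ => Sum.inr h

lemma lmerge_eval {c c' : G ⊕ H} (hside : c.isLeft = c'.isLeft) :
    evalLetter G H (lmerge c c') = (evalLetter G H c)⁻¹ * evalLetter G H c' := by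
  rcases c with g | h <;> rcases c' with g' | h' <;> simp_all [lmerge, evalLetter]

@[simp] lemma lmerge_isLeft (c c' : G ⊕ H) : (lmerge c c').isLeft = c.isLeft := by
  rcases c with g | h <;> rcases c' with g' | h' <;> rfl

lemma lmerge_ne {c c' : G ⊕ H} (hside : c.isLeft = c'.isLeft) (hne : c ≠ c') :
    lmerge c c' ≠ Sum.inl 1 ∧ lmerge c c' ≠ Sum.inr 1 := by
  rcases c with g | h <;> rcases c' with g' | h' <;> simp_all [lmerge]
  · exact fun e => hne (by rw [inv_mul_eq_one.mp e])
  · exact fun e => hne (by rw [inv_mul_eq_one.mp e])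

lemma reduced_singleton {a : G ⊕ H} (h1 : a ≠ Sum.inl 1) (h2 : a ≠ Sum.inr 1) :
    Reduced G H [a] := ⟨fun c hc => by rw [List.mem_singleton.mp hc]; exact ⟨h1, h2⟩, by simp [List.Chain']⟩

lemma sum_dfac_revinv {SG : Set G} {SH : Set H}
    (hSGsym : ∀ s ∈ SG, s⁻¹ ∈ SG) (hSHsym : ∀ s ∈ SH, s⁻¹ ∈ SH) (l : List (G ⊕ H)) :
    (((l.map linv).reverse).map (dfac SG SH)).sum = (l.map (dfac SG SH)).sum := by
  rw [List.map_reverse, List.sum_reverse, List.map_map]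
  exact congrArg List.sum (List.map_congr_left fun a _ => dfac_linv hSGsym hSHsym a)

lemma side_eq {lw' p r r' : List (G ⊕ H)} {c c' : G ⊕ H}
    (h : Reduced G H (lw' ++ (p ++ c :: r))) (h' : Reduced G H (lw' ++ (p ++ c' :: r')))
    (hh : ∀ a ∈ (p ++ c :: r).head?, a.isLeft = true)
    (hh' : ∀ a ∈ (p ++ c' :: r').head?, a.isLeft = true) :
    c.isLeft = c'.isLeft := by
  rcases List.eq_nil_or_concat p with rfl | ⟨q, d, rfl⟩
  · have h1 := hh c (by simp)
    have h2 := hh' c' (by simp)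
    rw [h1, h2]
  · have hch := (h.of_sublist (l' := q.concat d ++ c :: r) ⟨lw', [], by simp⟩).2
    have hch' := (h'.of_sublist (l' := q.concat d ++ c' :: r') ⟨lw', [], by simp⟩).2
    have h1 : d.isLeft ≠ c.isLeft :=
      (List.isChain_append.mp hch).2.2 d (by simp) c rfl
    have h2 : d.isLeft ≠ c'.isLeft :=
      (List.isChain_append.mp hch').2.2 d (by simp) c' rfl
    cases hc : c.isLeft <;> cases hc' : c'.isLeft <;> simp_all

end Small

end Aux

/-- For `w = w'g` (with `w'` reduced ending in `H` or trivial, `g ≠ e_G`),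
the preimage `π⁻¹(T_{n+1}^w)` — the elements whose reduced form extends `w'` by between
`1` and `n + 2` alternating letters starting in `G` — decomposes as the disjoint union of
`π⁻¹(T_n^w)` and the fibres `C_s = π⁻¹(v)` over the vertices `v` (branch words `s` of
length `n + 1`) at distance exactly `n + 1` below `π(w)`; each fibre is isometric to
`G \ {e}` or `H \ {e}` via left translation by the branch point `u = w's`, and for distinct
branch words `s ≠ s'`, `y ∈ C_s`, `y' ∈ C_{s'}`:
`d(y, y') = d(y, u) + d(u, u') + d(u', y')`. -/
theorem stmt19
    (SG : Set G) (hSGfin : SG.Finite) (hSGsym : ∀ s ∈ SG, s⁻¹ ∈ SG)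
    (hSGgen : Subgroup.closure SG = ⊤)
    (SH : Set H) (hSHfin : SH.Finite) (hSHsym : ∀ s ∈ SH, s⁻¹ ∈ SH)
    (hSHgen : Subgroup.closure SH = ⊤)
    (S : Set (Coprod G H))
    (hS : S = (Coprod.inl : G →* Coprod G H) '' SG ∪ (Coprod.inr : H →* Coprod G H) '' SH)
    (n : ℕ)
    (w' : Coprod G H) (lw' : List (G ⊕ H)) (hlw' : Reduced G H lw')
    (hlw'w : listProd G H lw' = w')
    (hend : ∀ a ∈ lw'.getLast?, a.isRight = true)
    (g : G) (hg : g ≠ 1) (w : Coprod G H) (hw : w = w' * Coprod.inl g)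
    -- `Pre j` is the preimage `π⁻¹(T_j^w)` of the depth-`j` subtree below `π(w)`
    (Pre : ℕ → Set (Coprod G H))
    (hPre : ∀ j : ℕ, Pre j = {y | ∃ s : List (G ⊕ H), s ≠ [] ∧ s.length ≤ j + 1 ∧
      (∀ a ∈ s.head?, a.isLeft = true) ∧ Reduced G H (lw' ++ s) ∧ listProd G H (lw' ++ s) = y})
    -- `D` is the set of branch words of the vertices at distance exactly `n+1` from `π(w)`
    (D : Set (List (G ⊕ H)))
    (hD : D = {s | s.length = n + 1 ∧ (∀ a ∈ s.head?, a.isLeft = true) ∧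
      Reduced G H (lw' ++ s)})
    -- `C s` is the fibre `π⁻¹(v)` over the vertex `v` with branch word `s`
    (C : List (G ⊕ H) → Set (Coprod G H))
    (hC : ∀ s, C s = {y | ∃ a : G ⊕ H,
      Reduced G H (lw' ++ s ++ [a]) ∧ y = listProd G H (lw' ++ s ++ [a])}) :
    -- the decomposition π⁻¹(T_{n+1}^w) = π⁻¹(T_n^w) ⊔ ⨆_s C_s
    (Pre (n + 1) = Pre n ∪ ⋃ s ∈ D, C s) ∧
    (∀ s ∈ D, Disjoint (Pre n) (C s)) ∧
    (∀ s ∈ D, ∀ s' ∈ D, s ≠ s' → Disjoint (C s) (C s')) ∧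
    -- each fibre is isometric to the corresponding factor via left translation
    (∀ s ∈ D, (∀ z z' : G,
        wordDist S (listProd G H (lw' ++ s) * Coprod.inl z)
          (listProd G H (lw' ++ s) * Coprod.inl z') = wordDist SG z z') ∧
      (∀ z z' : H,
        wordDist S (listProd G H (lw' ++ s) * Coprod.inr z)
          (listProd G H (lw' ++ s) * Coprod.inr z') = wordDist SH z z')) ∧
    -- distances between distinct fibres pass through the branch points
    (∀ s ∈ D, ∀ s' ∈ D, s ≠ s' → ∀ y ∈ C s, ∀ y' ∈ C s',
      wordDist S y y' =
        wordDist S y (listProd G H (lw' ++ s)) +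
        wordDist S (listProd G H (lw' ++ s)) (listProd G H (lw' ++ s')) +
        wordDist S (listProd G H (lw' ++ s')) y') := by
  refine ⟨?_, ?_, ?_, ?_, ?_⟩
  · -- part 1 : decomposition
    ext y
    simp only [hPre, hD, hC, Set.mem_setOf_eq, Set.mem_union, Set.mem_iUnion, exists_prop]
    constructor
    · rintro ⟨s, hne, hlen, hhead, hred, hprod⟩
      by_cases hle : s.length ≤ n + 1
      · exact Or.inl ⟨s, hne, hle, hhead, hred, hprod⟩
      · right
        have hlen2 : s.length = n + 2 := by omega
        rcases List.eq_nil_or_concat s with rfl | ⟨s₀, a, rfl⟩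
        · simp at hlen2
        have hs₀ : s₀ ≠ [] := by
          rintro rfl
          simp at hlen2
        refine ⟨s₀, ⟨?_, ?_, ?_⟩, a, ?_, ?_⟩
        · simpa using hlen2
        · intro x hx
          apply hhead
          rwa [List.concat_eq_append, List.head?_append_of_ne_nil _ hs₀]
        · exact hred.of_sublist ⟨[], [a], by simp⟩
        · rwa [List.concat_eq_append, ← List.append_assoc] at hred
        · rw [List.concat_eq_append, ← List.append_assoc] at hprod
          exact hprod.symm
    · rintro (⟨s, hne, hlen, hhead, hred, hprod⟩ | ⟨s, ⟨hslen, hshead, hsred⟩, a, hared, rfl⟩)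
      · exact ⟨s, hne, by omega, hhead, hred, hprod⟩
      · have hs : s ≠ [] := by rintro rfl; simp at hslen
        refine ⟨s ++ [a], by simp, by simp [hslen], ?_, by rw [← List.append_assoc]; exact hared,
          by rw [← List.append_assoc]⟩
        intro x hx
        apply hshead
        rwa [List.head?_append_of_ne_nil _ hs] at hx
  · -- part 2 : Pre n disjoint from fibres
    intro s hsD
    rw [Set.disjoint_left]
    rintro y hyP hyC
    rw [hPre, Set.mem_setOf_eq] at hyP
    rw [hC, Set.mem_setOf_eq] at hyC
    rw [hD, Set.mem_setOf_eq] at hsD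
    obtain ⟨t, htne, htlen, hthead, htred, htprod⟩ := hyP
    obtain ⟨a, hared, haprod⟩ := hyC
    have he : lw' ++ t = lw' ++ s ++ [a] :=
      listProd_injective htred hared (htprod.trans haprod)
    have ht : t = s ++ [a] := by
      rw [List.append_assoc] at he
      exact List.append_cancel_left he
    have : t.length = n + 2 := by simp [ht, hsD.1]
    omega
  · -- part 3 : distinct fibres are disjoint
    intro s hsD s' hs'D hss'
    rw [Set.disjoint_left]
    rintro y hyC hyC'
    rw [hC, Set.mem_setOf_eq] at hyC hyC'
    rw [hD, Set.mem_setOf_eq] at hsD hs'D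
    obtain ⟨a, hared, haprod⟩ := hyC
    obtain ⟨a', ha'red, ha'prod⟩ := hyC'
    have he : lw' ++ s ++ [a] = lw' ++ s' ++ [a'] :=
      listProd_injective hared ha'red (haprod.symm.trans ha'prod)
    rw [List.append_assoc, List.append_assoc] at he
    have he2 : s ++ [a] = s' ++ [a'] := List.append_cancel_left he
    exact hss' (List.append_inj he2 (by rw [hsD.1, hs'D.1])).1
  · -- part 4 : fibres are isometric to the factors
    intro s hsD
    constructor
    · intro z z'
      by_cases hz : z = z'
      · subst hz
        rw [wordDist_self, wordDist_self]
      · have hz1 : z⁻¹ * z' ≠ 1 := fun e => hz (inv_mul_eq_one.mp e)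
        have h1 : (listProd G H (lw' ++ s) * Coprod.inl z)⁻¹ *
            (listProd G H (lw' ++ s) * Coprod.inl z') =
            1⁻¹ * listProd G H [Sum.inl (z⁻¹ * z')] := by
          simp only [inv_one, one_mul, listProd_singleton, evalLetter, Sum.elim_inl,
            map_mul, map_inv]
          group
        rw [wordDist_congr h1,
          master hSGsym hSGgen hSHsym hSHgen hS
            (reduced_singleton (by simpa using hz1) (by simp))]
        simp only [List.map_cons, List.map_nil, List.sum_cons, List.sum_nil, dfac,
          Sum.elim_inl, add_zero]
        exact wordDist_congr (by group)
    · intro z z'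
      by_cases hz : z = z'
      · subst hz
        rw [wordDist_self, wordDist_self]
      · have hz1 : z⁻¹ * z' ≠ 1 := fun e => hz (inv_mul_eq_one.mp e)
        have h1 : (listProd G H (lw' ++ s) * Coprod.inr z)⁻¹ *
            (listProd G H (lw' ++ s) * Coprod.inr z') =
            1⁻¹ * listProd G H [Sum.inr (z⁻¹ * z')] := by
          simp only [inv_one, one_mul, listProd_singleton, evalLetter, Sum.elim_inr,
            map_mul, map_inv]
          group
        rw [wordDist_congr h1,
          master hSGsym hSGgen hSHsym hSHgen hS
            (reduced_singleton (by simp) (by simpa using hz1))]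
        simp only [List.map_cons, List.map_nil, List.sum_cons, List.sum_nil, dfac,
          Sum.elim_inr, add_zero]
        exact wordDist_congr (by group)
  · -- part 5 : distances between distinct fibres
    intro s hsD s' hs'D hss' y hy y' hy'
    rw [hD, Set.mem_setOf_eq] at hsD hs'D
    obtain ⟨hslen, hshead, hsred⟩ := hsD
    obtain ⟨hs'len, hs'head, hs'red⟩ := hs'D
    rw [hC, Set.mem_setOf_eq] at hy hy'
    obtain ⟨a, hared, rfl⟩ := hy
    obtain ⟨b, hbred, rfl⟩ := hy'
    obtain ⟨p, c, r, c', r', rfl, rfl, hcc⟩ := exists_split (hslen.trans hs'len.symm) hss'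
    have hside : c.isLeft = c'.isLeft := side_eq hsred hs'red hshead hs'head
    obtain ⟨hm1, hm2⟩ := lmerge_ne hside hcc
    have hmL : (lmerge c c').isLeft = c.isLeft := lmerge_isLeft c c'
    have hared' : Reduced G H ((lw' ++ p) ++ (c :: (r ++ [a]))) := by
      have he : (lw' ++ (p ++ c :: r)) ++ [a] = (lw' ++ p) ++ (c :: (r ++ [a])) := by simp
      rwa [he] at hared
    have hbred' : Reduced G H ((lw' ++ p) ++ (c' :: (r' ++ [b]))) := by
      have he : (lw' ++ (p ++ c' :: r')) ++ [b] = (lw' ++ p) ++ (c' :: (r' ++ [b])) := by simp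
      rwa [he] at hbred
    have hred1 : Reduced G H (c :: (r ++ [a])) := hared'.of_sublist ⟨lw' ++ p, [], by simp⟩
    have hred2 : Reduced G H (c' :: (r' ++ [b])) := hbred'.of_sublist ⟨lw' ++ p, [], by simp⟩
    have hredr : Reduced G H (c :: r) := hsred.of_sublist ⟨lw' ++ p, [], by simp⟩
    have hredr' : Reduced G H (c' :: r') := hs'red.of_sublist ⟨lw' ++ p, [], by simp⟩
    have ha_nt := hared.1 a (by simp)
    have hb_nt := hbred.1 b (by simp)
    have ha_nt' : linv a ≠ Sum.inl 1 ∧ linv a ≠ Sum.inr 1 := by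
      rcases a with g | h <;> simp_all [linv]
    -- d(y, u) = dfac a
    have e_yu : wordDist S (listProd G H (lw' ++ (p ++ c :: r) ++ [a]))
        (listProd G H (lw' ++ (p ++ c :: r))) = dfac SG SH a := by
      have h1 : (listProd G H (lw' ++ (p ++ c :: r) ++ [a]))⁻¹ *
          listProd G H (lw' ++ (p ++ c :: r)) = 1⁻¹ * listProd G H [linv a] := by
        simp only [inv_one, one_mul, listProd_singleton, eval_linv, listProd_append]
        group
      rw [wordDist_congr h1,
        master hSGsym hSGgen hSHsym hSHgen hS (reduced_singleton ha_nt'.1 ha_nt'.2)]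
      simp [dfac_linv hSGsym hSHsym]
    -- d(u', y') = dfac b
    have e_uy' : wordDist S (listProd G H (lw' ++ (p ++ c' :: r')))
        (listProd G H (lw' ++ (p ++ c' :: r') ++ [b])) = dfac SG SH b := by
      have h1 : (listProd G H (lw' ++ (p ++ c' :: r')))⁻¹ *
          listProd G H (lw' ++ (p ++ c' :: r') ++ [b]) = 1⁻¹ * listProd G H [b] := by
        simp only [inv_one, one_mul, listProd_singleton, listProd_append]
        group
      rw [wordDist_congr h1,
        master hSGsym hSGgen hSHsym hSHgen hS (reduced_singleton hb_nt.1 hb_nt.2)]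
      simp
    -- d(u, u')
    have e_uu' : wordDist S (listProd G H (lw' ++ (p ++ c :: r)))
        (listProd G H (lw' ++ (p ++ c' :: r'))) =
        ((r.map (dfac SG SH)).sum + (dfac SG SH (lmerge c c') +
          (r'.map (dfac SG SH)).sum)) := by
      have hW₀red : Reduced G H ((r.map linv).reverse ++ lmerge c c' :: r') :=
        reduced_glue hredr (reduced_replace_head hredr' ⟨hm1, hm2⟩ (hmL.trans hside)) hmL
      have h1 : (listProd G H (lw' ++ (p ++ c :: r)))⁻¹ *
          listProd G H (lw' ++ (p ++ c' :: r')) =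
          1⁻¹ * listProd G H ((r.map linv).reverse ++ lmerge c c' :: r') := by
        rw [inv_one, one_mul, listProd_glue (lmerge_eval hside)]
        simp only [listProd_append, listProd_cons]
        group
      rw [wordDist_congr h1, master hSGsym hSGgen hSHsym hSHgen hS hW₀red,
        List.map_append, List.sum_append, List.map_cons, List.sum_cons,
        sum_dfac_revinv hSGsym hSHsym]
    -- d(y, y')
    have e_yy' : wordDist S (listProd G H (lw' ++ (p ++ c :: r) ++ [a]))
        (listProd G H (lw' ++ (p ++ c' :: r') ++ [b])) =
        (((r ++ [a]).map (dfac SG SH)).sum + (dfac SG SH (lmerge c c') +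
          ((r' ++ [b]).map (dfac SG SH)).sum)) := by
      have hWred : Reduced G H (((r ++ [a]).map linv).reverse ++ lmerge c c' :: (r' ++ [b])) :=
        reduced_glue hred1 (reduced_replace_head hred2 ⟨hm1, hm2⟩ (hmL.trans hside)) hmL
      have h1 : (listProd G H (lw' ++ (p ++ c :: r) ++ [a]))⁻¹ *
          listProd G H (lw' ++ (p ++ c' :: r') ++ [b]) =
          1⁻¹ * listProd G H (((r ++ [a]).map linv).reverse ++ lmerge c c' :: (r' ++ [b])) := by
        rw [inv_one, one_mul, listProd_glue (lmerge_eval hside)]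
        simp only [listProd_append, listProd_cons, listProd_singleton]
        group
      rw [wordDist_congr h1, master hSGsym hSGgen hSHsym hSHgen hS hWred,
        List.map_append, List.sum_append, List.map_cons, List.sum_cons,
        sum_dfac_revinv hSGsym hSHsym]
    rw [e_yu, e_uy', e_uu', e_yy', List.map_append, List.sum_append,
      List.map_append, List.sum_append]
    simp only [List.map_cons, List.map_nil, List.sum_cons, List.sum_nil, add_zero]
    omega
end
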